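/- arXiv:1312.2773 — 2 statements merged into one kernel-verified Lean document; each statement's English description precedes it below -/
import Mathlib

section
/- Let μ, ν, Γ, R ∈ ℝ with R > 0, and let C = C_r + iC_i ∈ ℂ. There exists φ ∈ ℝ such that A = R e^{iφ} satisfies 0 = (μ + iν)A + C|A|²A + Γ·conj(A) if and only if R satisfies the quartic equation (C_r² + C_i²)R⁴ + 2(μC_r + νC_i)R² + μ² + ν² − Γ² = 0. -/
open ComplexConjugate in
/-- Flat states of the FCGL equation: `A = R e^{iφ}` solves
`0 = (μ+iν)A + C|A|²A + Γ·conj A` for some phase `φ` iff `R` satisfies the quartic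
`(C_r²+C_i²)R⁴ + 2(μC_r+νC_i)R² + μ²+ν² − Γ² = 0`. -/
theorem flat_states_quartic (μ ν Γ R C_r C_i : ℝ) (hR : 0 < R) :
    (∃ φ : ℝ,
        (0 : ℂ) =
          ((μ : ℂ) + Complex.I * ν) * ((R : ℂ) * Complex.exp (Complex.I * φ)) +
            ((C_r : ℂ) + Complex.I * C_i) *
              (‖(R : ℂ) * Complex.exp (Complex.I * φ)‖ : ℂ) ^ 2 *
              ((R : ℂ) * Complex.exp (Complex.I * φ)) +
            (Γ : ℂ) * conj ((R : ℂ) * Complex.exp (Complex.I * φ))) ↔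
      (C_r ^ 2 + C_i ^ 2) * R ^ 4 + 2 * (μ * C_r + ν * C_i) * R ^ 2 +
          μ ^ 2 + ν ^ 2 - Γ ^ 2 = 0 := by
  have hRc : (R:ℂ) ≠ 0 := by exact_mod_cast hR.ne'
  -- Step 1: rewrite the equation for each φ
  have step1 : ∀ φ : ℝ,
      ((0 : ℂ) =
          ((μ : ℂ) + Complex.I * ν) * ((R : ℂ) * Complex.exp (Complex.I * φ)) +
            ((C_r : ℂ) + Complex.I * C_i) *
              (‖(R : ℂ) * Complex.exp (Complex.I * φ)‖ : ℂ) ^ 2 *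
              ((R : ℂ) * Complex.exp (Complex.I * φ)) +
            (Γ : ℂ) * conj ((R : ℂ) * Complex.exp (Complex.I * φ)))
      ↔ ((μ : ℂ) + Complex.I * ν + ((C_r : ℂ) + Complex.I * C_i) * (R:ℂ)^2)
          * Complex.exp (Complex.I * (2*φ)) = -(Γ:ℂ) := by
    intro φ
    have habs : (‖(R : ℂ) * Complex.exp (Complex.I * φ)‖ : ℂ) = (R:ℂ) := by
      rw [norm_mul, Complex.norm_exp]
      simp [abs_of_pos hR, hR.le]
    have hconj : conj ((R : ℂ) * Complex.exp (Complex.I * φ)) =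
        (R:ℂ) * Complex.exp (-(Complex.I * φ)) := by
      rw [map_mul, ← Complex.exp_conj]
      simp
    have hee : Complex.exp (-(Complex.I * φ)) * Complex.exp (Complex.I * φ) = 1 := by
      rw [← Complex.exp_add]; simp
    have he2 : Complex.exp (Complex.I * (2*(φ:ℂ))) =
        Complex.exp (Complex.I * φ) * Complex.exp (Complex.I * φ) := by
      rw [← Complex.exp_add]; ring_nf
    rw [habs, hconj]
    constructor
    · intro h
      have h3 : (R:ℂ) * (((μ : ℂ) + Complex.I * ν + ((C_r : ℂ) + Complex.I * C_i) * (R:ℂ)^2)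
          * Complex.exp (Complex.I * φ) + (Γ:ℂ) * Complex.exp (-(Complex.I * φ))) = 0 := by
        linear_combination -h
      have h4 := (mul_eq_zero.mp h3).resolve_left hRc
      linear_combination ((μ : ℂ) + Complex.I * ν + ((C_r : ℂ) + Complex.I * C_i) * (R:ℂ)^2) * he2
        + Complex.exp (Complex.I * φ) * h4 - (Γ:ℂ) * hee
    · intro h
      linear_combination (-(R:ℂ) * Complex.exp (-(Complex.I * φ))) * h
        + ((R:ℂ) * Complex.exp (-(Complex.I * φ)) *
            ((μ : ℂ) + Complex.I * ν + ((C_r : ℂ) + Complex.I * C_i) * (R:ℂ)^2)) * he2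
        + ((R:ℂ) * Complex.exp (Complex.I * φ) *
            ((μ : ℂ) + Complex.I * ν + ((C_r : ℂ) + Complex.I * C_i) * (R:ℂ)^2)) * hee
  -- normSq of z
  have hnsq : Complex.normSq ((μ : ℂ) + Complex.I * ν + ((C_r : ℂ) + Complex.I * C_i) * (R:ℂ)^2)
      = (μ + C_r * R^2)^2 + (ν + C_i * R^2)^2 := by
    simp [Complex.normSq_apply, ← Complex.ofReal_pow]
    ring
  have step2 : ((C_r ^ 2 + C_i ^ 2) * R ^ 4 + 2 * (μ * C_r + ν * C_i) * R ^ 2 +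
          μ ^ 2 + ν ^ 2 - Γ ^ 2 = 0) ↔
      Complex.normSq ((μ : ℂ) + Complex.I * ν + ((C_r : ℂ) + Complex.I * C_i) * (R:ℂ)^2)
        = Γ^2 := by
    rw [hnsq]; constructor <;> intro h <;> nlinarith [h]
  constructor
  · rintro ⟨φ, h⟩
    rw [step1 φ] at h
    have h2 := congrArg Complex.normSq h
    simp only [map_mul, Complex.normSq_neg] at h2
    have h1 : Complex.normSq (Complex.exp (Complex.I * (2*(φ:ℂ)))) = 1 := by
      rw [Complex.normSq_eq_norm_sq, Complex.norm_exp]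
      simp
    rw [h1, mul_one] at h2
    refine step2.mpr ?_
    rw [h2, Complex.normSq_ofReal]
    ring
  · intro h
    have h' := step2.mp h
    by_cases hz : ((μ : ℂ) + Complex.I * ν + ((C_r : ℂ) + Complex.I * C_i) * (R:ℂ)^2) = 0
    · have hΓ : (Γ:ℝ) = 0 := by
        rw [hz, map_zero] at h'
        nlinarith [h']
      exact ⟨0, by rw [step1 0]; rw [hz, hΓ]; simp⟩
    · set z : ℂ := (μ : ℂ) + Complex.I * ν + ((C_r : ℂ) + Complex.I * C_i) * (R:ℂ)^2 with hzdef
      set w : ℂ := -(Γ:ℂ) / z with hw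
      have habsz : ‖z‖ = |Γ| := by
        have h3 := Complex.sq_norm z
        rw [h'] at h3
        nlinarith [norm_nonneg z, abs_nonneg Γ, sq_abs Γ]
      by_cases hΓ : (Γ:ℝ) = 0
      · exfalso
        apply hz
        apply Complex.normSq_eq_zero.mp
        rw [h', hΓ]; ring
      · have hwabs : ‖w‖ = 1 := by
          rw [hw, norm_div, norm_neg, habsz, Complex.norm_real, Real.norm_eq_abs]
          field_simp [abs_ne_zero.mpr hΓ]
        refine ⟨Complex.arg w / 2, ?_⟩
        rw [step1]
        have hweq : Complex.exp (Complex.I * (2 * ((Complex.arg w / 2 : ℝ) : ℂ))) = w := by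
          have h4 := Complex.norm_mul_exp_arg_mul_I w
          rw [hwabs] at h4
          rw [show Complex.I * (2 * ((Complex.arg w / 2 : ℝ) : ℂ))
                = (Complex.arg w : ℂ) * Complex.I by push_cast; ring]
          simpa using h4
        rw [hweq, hw]
        field_simp
end

section
/- Let μ, ν, α, β, λ ∈ ℝ with μ ≠ 0 and (μ,ν) ≠ (0,0), let C = C_r + iC_i ∈ ℂ, let Γ₀ = √(μ² + ν²), and let φ₁ ∈ ℝ satisfy e^{−2iφ₁} = −(μ + iν)/Γ₀. Suppose B : ℝ × ℝ → ℝ and A₃ : ℝ × ℝ → ℂ are functions (with the indicated partial derivatives of B existing) satisfying at every (X,T): B_T e^{iφ₁} = (μ + iν)A₃ + (α + iβ)B_XX e^{iφ₁} + C B³ e^{iφ₁} + λ B e^{−iφ₁} + Γ₀·conj(A₃). Then B satisfies the Allen–Cahn equation B_T = (−λΓ₀/μ)B + ((αμ + βν)/μ)B_XX + ((μC_r + νC_i)/μ)B³ at every (X,T). -/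
open ComplexConjugate in
/-- Reduction of the FCGL to the Allen–Cahn equation near onset: if `B` (real) and `A₃`
(complex) satisfy the third-order solvability equation, then `B` satisfies
`B_T = (−λΓ₀/μ)B + ((αμ+βν)/μ)B_XX + ((μC_r+νC_i)/μ)B³`. -/
theorem FCGL_to_AllenCahn (μ ν α β lam C_r C_i : ℝ) (hμ : μ ≠ 0)
    (hμν : ¬(μ = 0 ∧ ν = 0)) (φ₁ : ℝ)
    (hφ : Complex.exp (-2 * Complex.I * φ₁) =
      -(((μ : ℂ) + Complex.I * ν) / (Real.sqrt (μ ^ 2 + ν ^ 2) : ℂ)))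
    (B : ℝ → ℝ → ℝ) (A₃ : ℝ → ℝ → ℂ)
    (h : ∀ X T : ℝ,
      ((deriv (fun T' => B X T') T : ℝ) : ℂ) * Complex.exp (Complex.I * φ₁) =
        ((μ : ℂ) + Complex.I * ν) * A₃ X T +
          ((α : ℂ) + Complex.I * β) *
            ((deriv (fun X' => deriv (fun X'' => B X'' T) X') X : ℝ) : ℂ) *
            Complex.exp (Complex.I * φ₁) +
          ((C_r : ℂ) + Complex.I * C_i) * ((B X T : ℝ) : ℂ) ^ 3 *
            Complex.exp (Complex.I * φ₁) +
          (lam : ℂ) * ((B X T : ℝ) : ℂ) * Complex.exp (-Complex.I * φ₁) +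
          (Real.sqrt (μ ^ 2 + ν ^ 2) : ℂ) * conj (A₃ X T)) :
    ∀ X T : ℝ,
      deriv (fun T' => B X T') T =
        (-lam * Real.sqrt (μ ^ 2 + ν ^ 2) / μ) * B X T +
          ((α * μ + β * ν) / μ) * deriv (fun X' => deriv (fun X'' => B X'' T) X') X +
          ((μ * C_r + ν * C_i) / μ) * (B X T) ^ 3 := by
  intro X T
  have hspos : 0 < Real.sqrt (μ ^ 2 + ν ^ 2) :=
    Real.sqrt_pos.2 (by positivity)
  set s : ℝ := Real.sqrt (μ ^ 2 + ν ^ 2) with hsdef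
  have hs0 : s ≠ 0 := ne_of_gt hspos
  have hs2 : s * s = μ ^ 2 + ν ^ 2 := Real.mul_self_sqrt (by positivity)
  set e : ℂ := Complex.exp (Complex.I * φ₁) with hedef
  have he : e ≠ 0 := Complex.exp_ne_zero _
  have hconj : (starRingEnd ℂ) e = Complex.exp (-Complex.I * φ₁) := by
    rw [hedef, ← Complex.exp_conj]
    congr 1
    simp [Complex.conj_I]
  have hinv : Complex.exp (-Complex.I * φ₁) = e⁻¹ := by
    rw [hedef, ← Complex.exp_neg]
    ring_nf
  have hE2 : Complex.exp (-2 * Complex.I * φ₁) = (e * e)⁻¹ := by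
    rw [hedef, ← Complex.exp_add, ← Complex.exp_neg]
    ring_nf
  -- e * e = -(μ - I ν)/s
  have hz : e * e = ↑(-μ / s) + Complex.I * ↑(ν / s) := by
    have h1 : (e * e)⁻¹ = -(((μ : ℂ) + Complex.I * ν) / (s : ℂ)) := by
      rw [← hE2]; exact hφ
    have hee : e * e ≠ 0 := mul_ne_zero he he
    have h2 : (1 : ℂ) = (e * e) * (-(((μ : ℂ) + Complex.I * ν) / (s : ℂ))) := by
      rw [← h1, mul_inv_cancel₀ hee]
    have hsC : (s : ℂ) ≠ 0 := by exact_mod_cast hs0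
    have hgoal : ((↑(-μ / s) + Complex.I * ↑(ν / s)) : ℂ) *
        (-(((μ : ℂ) + Complex.I * ν) / (s : ℂ))) = 1 := by
      have hs2C : (s : ℂ) * (s : ℂ) = (μ : ℂ) ^ 2 + (ν : ℂ) ^ 2 := by
        exact_mod_cast congrArg (fun x : ℝ => (x : ℂ)) hs2
      have hsC : (s : ℂ) ≠ 0 := by exact_mod_cast hs0
      push_cast
      field_simp
      linear_combination (-(ν:ℂ)^2) * Complex.I_sq - hs2C
    have hw : (-(((μ : ℂ) + Complex.I * ν) / (s : ℂ))) ≠ 0 := by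
      rw [← h1]; exact inv_ne_zero hee
    have := h2.symm.trans hgoal.symm
    exact mul_right_cancel₀ hw this
  have hee1 : (starRingEnd ℂ) e * e = 1 := by
    rw [hconj, hedef, ← Complex.exp_add]
    ring_nf
    exact Complex.exp_zero
  have hμIνe : ((μ : ℂ) + Complex.I * ν) * e = -(s : ℂ) * (starRingEnd ℂ) e := by
    have h1 : (((μ : ℂ) + Complex.I * ν) * e) * e = (-(s : ℂ) * (starRingEnd ℂ) e) * e := by
      have hs2C : (s : ℂ) * (s : ℂ) = (μ : ℂ) ^ 2 + (ν : ℂ) ^ 2 := by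
        exact_mod_cast congrArg (fun x : ℝ => (x : ℂ)) hs2
      have hsC : (s : ℂ) ≠ 0 := by exact_mod_cast hs0
      rw [mul_assoc, hz]
      push_cast
      field_simp
      linear_combination ((ν:ℂ)^2) * Complex.I_sq + hs2C +
        ((s:ℂ)^2) * hee1
    exact mul_right_cancel₀ he h1
  have hmain := h X T
  rw [← hconj] at hmain
  set t := deriv (fun T' => B X T') T with htdef
  set d := deriv (fun X' => deriv (fun X'' => B X'' T) X') X with hddef
  set b := B X T with hbdef
  set w : ℂ := (starRingEnd ℂ) (A₃ X T) * e with hwdef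
  have key : (t : ℂ) * (e * e) =
      -(s : ℂ) * ((starRingEnd ℂ) w) +
        (((α : ℂ) + Complex.I * β) * d + ((C_r : ℂ) + Complex.I * C_i) * (b : ℂ) ^ 3) * (e * e) +
        (lam : ℂ) * b + (s : ℂ) * w := by
    have hw : (starRingEnd ℂ) w = A₃ X T * (starRingEnd ℂ) e := by
      rw [hwdef, map_mul]
      simp
    rw [hw]
    linear_combination e * hmain + (A₃ X T) * hμIνe + ((lam : ℂ) * (b : ℂ)) * hee1
  rw [hz] at key
  have hre := congrArg Complex.re key
  simp [Complex.add_re, Complex.mul_re, Complex.mul_im, Complex.add_im,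
    Complex.ofReal_re, Complex.ofReal_im, Complex.I_re, Complex.I_im,
    Complex.conj_re, Complex.conj_im, ← Complex.ofReal_pow] at hre
  have hre2 : (t * μ - ((α * d + C_r * b ^ 3) * μ + (β * d + C_i * b ^ 3) * ν
      - lam * b * s)) * (s * s) = 0 := by
    field_simp at hre
    linear_combination (-(s*s)) * hre
  have hre3 : t * μ = (α * d + C_r * b ^ 3) * μ + (β * d + C_i * b ^ 3) * ν
      - lam * b * s := by
    rcases mul_eq_zero.1 hre2 with h' | h'
    · linarith
    · exact absurd h' (mul_ne_zero hs0 hs0)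
  field_simp
  linear_combination hre3
end
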